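/- Let V : ℝᵈ → ℝ be twice continuously differentiable, M a real symmetric positive definite d×d matrix, J₁ and J₂ real antisymmetric d×d matrices, and μ, ν ∈ ℝ. Define ρ(q,p) = exp(−V(q) − (1/2)·p·M⁻¹p) and the vector field γ(q,p) = (M⁻¹p − μJ₁∇V(q), −∇V(q) − νJ₂M⁻¹p) on ℝᵈ × ℝᵈ. Then the divergence of ρ·γ vanishes identically: ∇·(ρ γ)(q,p) = 0 for all (q,p) ∈ ℝ^{2d}. -/

import Mathlib

open Matrix

/-- The gradient of `V : ℝᵈ → ℝ` at `q`, as a vector. -/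
noncomputable def gradV {d : ℕ} (V : (Fin d → ℝ) → ℝ) (q : Fin d → ℝ) : Fin d → ℝ :=
  fun i => fderiv ℝ V q (Pi.single i 1)

private lemma sum_antisymm {d : ℕ} (B : Matrix (Fin d) (Fin d) ℝ) (hB : Bᵀ = -B)
    (f : Fin d → Fin d → ℝ) (hf : ∀ i k, f i k = f k i) :
    ∑ i, ∑ k, B i k * f i k = 0 := by
  have h2 : ∀ i k, B k i = - B i k := by
    intro i k
    have := congrFun (congrFun hB i) k
    simpa [Matrix.transpose_apply] using this
  have key : (∑ i, ∑ k, B i k * f i k) = - ∑ i, ∑ k, B i k * f i k := by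
    calc ∑ i, ∑ k, B i k * f i k = ∑ k, ∑ i, B i k * f i k := Finset.sum_comm
    _ = ∑ k, ∑ i, -(B k i * f k i) := by
        refine Finset.sum_congr rfl fun k _ => Finset.sum_congr rfl fun i _ => ?_
        rw [h2 k i, hf k i]; ring
    _ = - ∑ k, ∑ i, B k i * f k i := by
        simp
  linarith

private lemma mulVec_dot_self_antisymm {d : ℕ} (B : Matrix (Fin d) (Fin d) ℝ)
    (hB : Bᵀ = -B) (v : Fin d → ℝ) :
    ∑ i, (B *ᵥ v) i * v i = 0 := by
  have h : ∑ i, (B *ᵥ v) i * v i = ∑ i, ∑ k, B i k * (v k * v i) := by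
    refine Finset.sum_congr rfl fun i _ => ?_
    simp [mulVec, dotProduct, Finset.sum_mul, mul_assoc]
  rw [h]
  exact sum_antisymm B hB _ (fun i k => by ring)

/-- The invariance condition for the perturbed underdamped Langevin dynamics:
with `ρ(q,p) = exp(-V(q) - p·M⁻¹p/2)` and the vector field
`γ(q,p) = (M⁻¹p - μJ₁∇V(q), -∇V(q) - νJ₂M⁻¹p)`, the divergence of `ρ·γ`
vanishes identically on `ℝᵈ × ℝᵈ`. -/
theorem stmt9 {d : ℕ} (V : (Fin d → ℝ) → ℝ) (hV : ContDiff ℝ 2 V)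
    (M J₁ J₂ : Matrix (Fin d) (Fin d) ℝ) (hM : M.PosDef)
    (hJ₁ : J₁ᵀ = -J₁) (hJ₂ : J₂ᵀ = -J₂) (μ ν : ℝ)
    (ρ : (Fin d → ℝ) × (Fin d → ℝ) → ℝ)
    (hρ : ∀ x, ρ x = Real.exp (-V x.1 - (1 / 2) * (x.2 ⬝ᵥ M⁻¹.mulVec x.2)))
    (F : (Fin d → ℝ) × (Fin d → ℝ) → (Fin d → ℝ) × (Fin d → ℝ))
    (hF : ∀ x, F x = (M⁻¹.mulVec x.2 - μ • J₁.mulVec (gradV V x.1),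
                      -(gradV V x.1) - ν • J₂.mulVec (M⁻¹.mulVec x.2))) :
    ∀ x : (Fin d → ℝ) × (Fin d → ℝ),
      (∑ i, fderiv ℝ (fun y => ρ y * (F y).1 i) x (Pi.single i 1, 0)) +
      (∑ i, fderiv ℝ (fun y => ρ y * (F y).2 i) x (0, Pi.single i 1)) = 0 := by
  intro x
  obtain ⟨q, p⟩ := x
  have hMsymm : Mᵀ = M := by simpa using hM.1.eq
  have hAsymm : M⁻¹ᵀ = M⁻¹ := by rw [transpose_nonsing_inv, hMsymm]
  set A := M⁻¹ with hAdef
  have hAs : ∀ i k, A k i = A i k := fun i k => by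
    simpa using congrFun (congrFun hAsymm i) k
  have hdV : Differentiable ℝ V := (hV.of_le one_le_two).differentiable one_ne_zero
  have hgradC : ∀ k, Differentiable ℝ (fun q' => gradV V q' k) := fun k => by
    simp only [gradV]
    exact ((hV.fderiv_right (m := 1) (by norm_num)).clm_apply contDiff_const).differentiable one_ne_zero
  set a := gradV V q with hadef
  set u := A *ᵥ p with hudef
  set H : Fin d → Fin d → ℝ :=
    fun i k => fderiv ℝ (fun q' => gradV V q' k) q (Pi.single i 1) with hHdef
  have hHsymm : ∀ i k, H i k = H k i := by
    intro i k
    have hd : DifferentiableAt ℝ (fderiv ℝ V) q :=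
      ((hV.fderiv_right (m := 1) (by norm_num)).differentiable one_ne_zero).differentiableAt
    have hsym := (hV.contDiffAt (x := q)).isSymmSndFDerivAt (by norm_num)
    simp only [hHdef, gradV]
    rw [fderiv_clm_apply hd (differentiableAt_const _),
        fderiv_clm_apply hd (differentiableAt_const _)]
    simp [hsym (Pi.single i 1) (Pi.single k 1)]
  -- coordinate derivatives
  have hc2 : ∀ j : Fin d, HasFDerivAt (fun y : (Fin d → ℝ) × (Fin d → ℝ) => y.2 j)
      ((ContinuousLinearMap.proj j).comp (ContinuousLinearMap.snd ℝ (Fin d → ℝ) (Fin d → ℝ)))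
      (q, p) :=
    fun j => ((ContinuousLinearMap.proj j).comp
      (ContinuousLinearMap.snd ℝ (Fin d → ℝ) (Fin d → ℝ))).hasFDerivAt
  have hgc : ∀ k : Fin d, HasFDerivAt (fun y : (Fin d → ℝ) × (Fin d → ℝ) => gradV V y.1 k)
      ((fderiv ℝ (fun q' => gradV V q' k) q).comp
        (ContinuousLinearMap.fst ℝ (Fin d → ℝ) (Fin d → ℝ))) (q, p) :=
    fun k => by
      have h := ((hgradC k q).hasFDerivAt).comp (q, p)
        (hasFDerivAt_fst (𝕜 := ℝ) (E := Fin d → ℝ) (F := Fin d → ℝ) (p := (q, p)))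
      exact h
  -- derivative of ρ with directional evaluations
  obtain ⟨Dρ, hρD, hρ1, hρ2⟩ :
      ∃ D : ((Fin d → ℝ) × (Fin d → ℝ)) →L[ℝ] ℝ, HasFDerivAt ρ D (q, p) ∧
        (∀ i, D (Pi.single i 1, 0) = -(ρ (q, p)) * a i) ∧
        (∀ i, D (0, Pi.single i 1) = -(ρ (q, p)) * u i) := by
    have hρfun : ρ = fun y : (Fin d → ℝ) × (Fin d → ℝ) =>
        Real.exp (-V y.1 - (1 / 2) * (y.2 ⬝ᵥ A *ᵥ y.2)) := funext hρ
    have hQ : HasFDerivAt (fun y : (Fin d → ℝ) × (Fin d → ℝ) => y.2 ⬝ᵥ A *ᵥ y.2)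
        (∑ j, (p j • (∑ k, A j k •
            ((ContinuousLinearMap.proj k).comp
              (ContinuousLinearMap.snd ℝ (Fin d → ℝ) (Fin d → ℝ))))
          + (∑ k, A j k * p k) •
            ((ContinuousLinearMap.proj j).comp
              (ContinuousLinearMap.snd ℝ (Fin d → ℝ) (Fin d → ℝ))))) (q, p) := by
      exact HasFDerivAt.fun_sum (fun j (_ : j ∈ Finset.univ) =>
        (hc2 j).fun_mul (HasFDerivAt.fun_sum (fun k (_ : k ∈ Finset.univ) =>
          (hc2 k).const_mul (A j k))))
    have hVc : HasFDerivAt (fun y : (Fin d → ℝ) × (Fin d → ℝ) => V y.1)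
        ((fderiv ℝ V q).comp (ContinuousLinearMap.fst ℝ (Fin d → ℝ) (Fin d → ℝ))) (q, p) :=
      by
        have h := (hdV q).hasFDerivAt.comp (q, p)
          (hasFDerivAt_fst (𝕜 := ℝ) (E := Fin d → ℝ) (F := Fin d → ℝ) (p := (q, p)))
        exact h
    have hg := (hVc.neg.sub (hQ.const_mul (1 / 2))).exp
    refine ⟨_, by rw [hρfun]; exact hg, ?_, ?_⟩
    · intro i
      simp [ContinuousLinearMap.smul_apply, ContinuousLinearMap.sub_apply,
        ContinuousLinearMap.comp_apply, ContinuousLinearMap.coe_fst',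
        ContinuousLinearMap.coe_snd', ContinuousLinearMap.proj_apply,
        ContinuousLinearMap.sum_apply, hρ, hadef, gradV]
    · intro i
      simp [ContinuousLinearMap.smul_apply, ContinuousLinearMap.sub_apply,
        ContinuousLinearMap.comp_apply, ContinuousLinearMap.coe_fst',
        ContinuousLinearMap.coe_snd', ContinuousLinearMap.proj_apply,
        ContinuousLinearMap.sum_apply, hρ, hudef, Pi.single_apply, mul_ite,
        Finset.sum_ite_eq', mulVec, dotProduct]
      rw [Finset.sum_add_distrib, Finset.sum_ite_eq']
      have he : ∑ x, p x * A x i = ∑ x, A i x * p x :=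
        Finset.sum_congr rfl fun k _ => by rw [hAs i k]; ring
      rw [he]
      simp
      ring
  -- derivative of first component of F with directional evaluation
  obtain ⟨D1, hD1, hD1e⟩ :
      ∃ D : Fin d → (((Fin d → ℝ) × (Fin d → ℝ)) →L[ℝ] ℝ),
        (∀ i, HasFDerivAt
          (fun y : (Fin d → ℝ) × (Fin d → ℝ) =>
            (A *ᵥ y.2) i - μ * (J₁ *ᵥ (gradV V y.1)) i) (D i) (q, p)) ∧
        (∀ i, D i (Pi.single i 1, 0) = -(μ * ∑ k, J₁ i k * H i k)) := by
    refine ⟨fun i => (∑ k, A i k • ((ContinuousLinearMap.proj k).comp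
          (ContinuousLinearMap.snd ℝ (Fin d → ℝ) (Fin d → ℝ))))
        - μ • (∑ k, J₁ i k • ((fderiv ℝ (fun q' => gradV V q' k) q).comp
          (ContinuousLinearMap.fst ℝ (Fin d → ℝ) (Fin d → ℝ)))), fun i => ?_, fun i => ?_⟩
    · exact (HasFDerivAt.fun_sum fun k (_ : k ∈ Finset.univ) => (hc2 k).const_mul (A i k)).fun_sub
        ((HasFDerivAt.fun_sum fun k (_ : k ∈ Finset.univ) =>
          (hgc k).const_mul (J₁ i k)).const_mul μ)
    · simp [ContinuousLinearMap.smul_apply, ContinuousLinearMap.sub_apply,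
        ContinuousLinearMap.comp_apply, ContinuousLinearMap.coe_fst',
        ContinuousLinearMap.coe_snd', ContinuousLinearMap.proj_apply,
        ContinuousLinearMap.sum_apply, hHdef]
  -- derivative of second component of F with directional evaluation
  obtain ⟨D2, hD2, hD2e⟩ :
      ∃ D : Fin d → (((Fin d → ℝ) × (Fin d → ℝ)) →L[ℝ] ℝ),
        (∀ i, HasFDerivAt
          (fun y : (Fin d → ℝ) × (Fin d → ℝ) =>
            -(gradV V y.1 i) - ν * (J₂ *ᵥ (A *ᵥ y.2)) i) (D i) (q, p)) ∧
        (∀ i, D i (0, Pi.single i 1) = -(ν * ∑ k, J₂ i k * A k i)) := by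
    refine ⟨fun i => -((fderiv ℝ (fun q' => gradV V q' i) q).comp
          (ContinuousLinearMap.fst ℝ (Fin d → ℝ) (Fin d → ℝ)))
        - ν • (∑ k, J₂ i k • (∑ l, A k l • ((ContinuousLinearMap.proj l).comp
          (ContinuousLinearMap.snd ℝ (Fin d → ℝ) (Fin d → ℝ))))), fun i => ?_, fun i => ?_⟩
    · exact (hgc i).fun_neg.fun_sub
        ((HasFDerivAt.fun_sum fun k (_ : k ∈ Finset.univ) =>
          (HasFDerivAt.fun_sum fun l (_ : l ∈ Finset.univ) =>
            (hc2 l).const_mul (A k l)).const_mul (J₂ i k)).const_mul ν)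
    · simp [ContinuousLinearMap.smul_apply, ContinuousLinearMap.sub_apply,
        ContinuousLinearMap.comp_apply, ContinuousLinearMap.coe_fst',
        ContinuousLinearMap.coe_snd', ContinuousLinearMap.proj_apply,
        ContinuousLinearMap.sum_apply, Pi.single_apply, mul_ite,
        Finset.sum_ite_eq']
  have key1 : ∀ i, fderiv ℝ (fun y => ρ y * (F y).1 i) (q, p) (Pi.single i 1, 0)
      = ρ (q, p) * (-(μ * ∑ k, J₁ i k * H i k))
        + (u i - μ * (J₁ *ᵥ a) i) * (-(ρ (q, p)) * a i) := by
    intro i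
    have hfun : (fun y => ρ y * (F y).1 i)
        = fun y : (Fin d → ℝ) × (Fin d → ℝ) =>
            ρ y * ((A *ᵥ y.2) i - μ * (J₁ *ᵥ (gradV V y.1)) i) := by
      funext y
      rw [hF]
      simp
    rw [hfun, fderiv_fun_mul hρD.differentiableAt (hD1 i).differentiableAt,
        hρD.fderiv, (hD1 i).fderiv]
    simp only [ContinuousLinearMap.add_apply, ContinuousLinearMap.smul_apply, smul_eq_mul,
      hρ1 i, hD1e i]
    rfl
  have key2 : ∀ i, fderiv ℝ (fun y => ρ y * (F y).2 i) (q, p) (0, Pi.single i 1)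
      = ρ (q, p) * (-(ν * ∑ k, J₂ i k * A k i))
        + (-(a i) - ν * (J₂ *ᵥ u) i) * (-(ρ (q, p)) * u i) := by
    intro i
    have hfun : (fun y => ρ y * (F y).2 i)
        = fun y : (Fin d → ℝ) × (Fin d → ℝ) =>
            ρ y * (-(gradV V y.1 i) - ν * (J₂ *ᵥ (A *ᵥ y.2)) i) := by
      funext y
      rw [hF]
      simp
    rw [hfun, fderiv_fun_mul hρD.differentiableAt (hD2 i).differentiableAt,
        hρD.fderiv, (hD2 i).fderiv]
    simp only [ContinuousLinearMap.add_apply, ContinuousLinearMap.smul_apply, smul_eq_mul,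
      hρ2 i, hD2e i]
    rfl
  simp only [key1, key2]
  have Z1 : ∑ i, ∑ k, J₁ i k * H i k = 0 := sum_antisymm J₁ hJ₁ H hHsymm
  have Z2 : ∑ i, ∑ k, J₂ i k * A k i = 0 := sum_antisymm J₂ hJ₂ _ (fun i k => hAs i k)
  have Z3 : ∑ i, (J₁ *ᵥ a) i * a i = 0 := mulVec_dot_self_antisymm J₁ hJ₁ a
  have Z4 : ∑ i, (J₂ *ᵥ u) i * u i = 0 := mulVec_dot_self_antisymm J₂ hJ₂ u
  have hs1 : ∑ i, (ρ (q, p) * (-(μ * ∑ k, J₁ i k * H i k))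
      + (u i - μ * (J₁ *ᵥ a) i) * (-(ρ (q, p)) * a i))
      = (-(ρ (q, p)) * μ) * (∑ i, ∑ k, J₁ i k * H i k)
        + (-(ρ (q, p))) * (∑ i, u i * a i)
        + (ρ (q, p) * μ) * (∑ i, (J₁ *ᵥ a) i * a i) := by
    rw [Finset.mul_sum, Finset.mul_sum, Finset.mul_sum, ← Finset.sum_add_distrib,
      ← Finset.sum_add_distrib]
    exact Finset.sum_congr rfl fun i _ => by ring
  have hs2 : ∑ i, (ρ (q, p) * (-(ν * ∑ k, J₂ i k * A k i))
      + (-(a i) - ν * (J₂ *ᵥ u) i) * (-(ρ (q, p)) * u i))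
      = (-(ρ (q, p)) * ν) * (∑ i, ∑ k, J₂ i k * A k i)
        + (ρ (q, p)) * (∑ i, u i * a i)
        + (ρ (q, p) * ν) * (∑ i, (J₂ *ᵥ u) i * u i) := by
    rw [Finset.mul_sum, Finset.mul_sum, Finset.mul_sum, ← Finset.sum_add_distrib,
      ← Finset.sum_add_distrib]
    exact Finset.sum_congr rfl fun i _ => by ring
  rw [hs1, hs2, Z1, Z2, Z3, Z4]
  ring
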